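/- An instance SSP'({k₁,...,kₙ}, M) (find xᵢ ∈ {-1,0,1} with Σ kᵢxᵢ = M) has a solution if and only if the twisted subset sum instance TSSP({0,k₁,0,k₂,...,0,kₙ}, M) has a solution, where TSSP({c₁,...,c_{2n}}, M) asks for x₁,...,x_{2n} ∈ {0,1} with Σⱼ cⱼ xⱼ (-1)^(x₁+⋯+x_{j-1}) = M. -/

import Mathlib

/-- `(-1)^m` for an integer `m`: `1` if `m` is even, `-1` if `m` is odd. -/
def eps (m : ℤ) : ℤ := if m % 2 = 0 then 1 else -1

lemma eps_cases (m : ℤ) : eps m = 1 ∨ eps m = -1 := by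
  unfold eps; split <;> simp

lemma eps_succ (m : ℤ) : eps (m + 1) = -eps m := by
  unfold eps
  rcases Int.emod_two_eq m with h | h
  · rw [if_pos h, if_neg (show ¬(m + 1) % 2 = 0 by omega)]
  · rw [if_neg (show ¬m % 2 = 0 by omega), if_pos (show (m + 1) % 2 = 0 by omega)]
    norm_num

lemma sum_range_two_mul (f : ℕ → ℤ) (n : ℕ) :
    ∑ j ∈ Finset.range (2 * n), f j = ∑ i ∈ Finset.range n, (f (2 * i) + f (2 * i + 1)) := by
  induction n with
  | zero => simp
  | succ n ih =>
    have h2 : 2 * (n + 1) = (2 * n + 1) + 1 := by ring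
    rw [h2, Finset.sum_range_succ, Finset.sum_range_succ, ih, Finset.sum_range_succ]
    ring

lemma fwd (k : ℕ → ℤ) : ∀ (n : ℕ) (M : ℤ) (x : ℕ → ℤ),
    (∀ i < n, x i ∈ ({-1, 0, 1} : Set ℤ)) →
    ∑ i ∈ Finset.range n, k i * x i = M →
    ∃ y : ℕ → ℤ, (∀ j < 2 * n, y j ∈ ({0, 1} : Set ℤ)) ∧
      ∑ j ∈ Finset.range (2 * n),
        (if j % 2 = 0 then 0 else k (j / 2)) * y j * eps (∑ i ∈ Finset.range j, y i) = M := by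
  intro n
  induction n with
  | zero =>
    intro M x _ hsum
    exact ⟨fun _ => 0, by simp, by simpa using hsum⟩
  | succ n ih =>
    intro M x hx hsum
    obtain ⟨y, hy, hysum⟩ := ih (∑ i ∈ Finset.range n, k i * x i) x
      (fun i hi => hx i (by omega)) rfl
    set p : ℤ := ∑ j ∈ Finset.range (2 * n), y j with hp
    set a : ℤ := if x n = 0 then 0 else if eps p = x n then 0 else 1 with ha
    set b : ℤ := if x n = 0 then 0 else 1 with hb
    refine ⟨fun j => if j < 2 * n then y j else if j = 2 * n then a else b, ?_, ?_⟩
    · intro j hj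
      beta_reduce
      by_cases h1 : j < 2 * n
      · simpa [h1] using hy j h1
      · by_cases h2 : j = 2 * n
        · subst h2
          rw [if_neg h1, if_pos rfl, ha]
          split_ifs <;> simp
        · rw [if_neg h1, if_neg h2, hb]
          split_ifs <;> simp
    · have hxn := hx n (by omega)
      have h2 : 2 * (n + 1) = (2 * n + 1) + 1 := by ring
      have hcongr : ∀ j, j ≤ 2 * n →
          (∑ i ∈ Finset.range j, if i < 2 * n then y i else if i = 2 * n then a else b)
            = ∑ i ∈ Finset.range j, y i := by
        intro j hj
        apply Finset.sum_congr rfl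
        intro i hi
        have : i < 2 * n := by
          have := Finset.mem_range.mp hi; omega
        simp [this]
      rw [h2, Finset.sum_range_succ, Finset.sum_range_succ]
      beta_reduce
      have hmain : ∑ j ∈ Finset.range (2 * n),
          (if j % 2 = 0 then 0 else k (j / 2)) *
            (if j < 2 * n then y j else if j = 2 * n then a else b) *
            eps (∑ i ∈ Finset.range j, if i < 2 * n then y i else if i = 2 * n then a else b)
          = ∑ i ∈ Finset.range n, k i * x i := by
        rw [← hysum]
        apply Finset.sum_congr rfl
        intro j hj
        have hjlt : j < 2 * n := Finset.mem_range.mp hj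
        rw [hcongr j (le_of_lt hjlt)]
        simp [hjlt]
      rw [hmain]
      have hterm0 : (if (2 * n) % 2 = 0 then (0 : ℤ) else k (2 * n / 2)) = 0 := by
        rw [if_pos (by omega)]
      rw [hterm0]
      have hterm1 : (if (2 * n + 1) % 2 = 0 then (0 : ℤ) else k ((2 * n + 1) / 2)) = k n := by
        rw [if_neg (by omega)]
        congr 1; omega
      rw [hterm1]
      have hval2n1 : (if 2 * n + 1 < 2 * n then y (2 * n + 1) else if 2 * n + 1 = 2 * n then a else b) = b := by
        rw [if_neg (by omega), if_neg (by omega)]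
      rw [hval2n1]
      have hsucc : (∑ i ∈ Finset.range (2 * n + 1),
          if i < 2 * n then y i else if i = 2 * n then a else b) = p + a := by
        rw [Finset.sum_range_succ, hcongr (2 * n) le_rfl]
        simp [hp]
      rw [hsucc]
      have hkey : k n * b * eps (p + a) = k n * x n := by
        rcases hxn with h | h | h
        · -- x n = -1
          have hb' : b = 1 := by rw [hb, if_neg (by rw [h]; norm_num)]
          rcases eps_cases p with he | he
          · have ha' : a = 1 := by
              rw [ha, if_neg (by rw [h]; norm_num), if_neg (by rw [he, h]; norm_num)]
            rw [hb', ha', eps_succ, he, h]; ring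
          · have ha' : a = 0 := by
              rw [ha, if_neg (by rw [h]; norm_num), if_pos (by rw [he, h])]
            rw [hb', ha', add_zero, he, h]; ring
        · -- x n = 0
          have hb' : b = 0 := by rw [hb, if_pos h]
          rw [hb', h]; ring
        · -- x n = 1
          simp only [Set.mem_singleton_iff] at h
          have hb' : b = 1 := by rw [hb, if_neg (by rw [h]; norm_num)]
          rcases eps_cases p with he | he
          · have ha' : a = 0 := by
              rw [ha, if_neg (by rw [h]; norm_num), if_pos (by rw [he, h])]
            rw [hb', ha', add_zero, he, h]; ring
          · have ha' : a = 1 := by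
              rw [ha, if_neg (by rw [h]; norm_num), if_neg (by rw [he, h]; norm_num)]
            rw [hb', ha', eps_succ, he, h]; ring
      rw [hkey, ← hsum, Finset.sum_range_succ]
      ring

theorem stmt7 (n : ℕ) (k : ℕ → ℤ) (M : ℤ) :
    (∃ x : ℕ → ℤ, (∀ i < n, x i ∈ ({-1, 0, 1} : Set ℤ)) ∧
      ∑ i ∈ Finset.range n, k i * x i = M) ↔
    (∃ x : ℕ → ℤ, (∀ j < 2 * n, x j ∈ ({0, 1} : Set ℤ)) ∧
      ∑ j ∈ Finset.range (2 * n),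
        (if j % 2 = 0 then 0 else k (j / 2)) * x j * eps (∑ i ∈ Finset.range j, x i) = M) := by
  constructor
  · rintro ⟨x, hx, hsum⟩
    exact fwd k n M x hx hsum
  · rintro ⟨y, hy, hsum⟩
    refine ⟨fun i => y (2 * i + 1) * eps (∑ j ∈ Finset.range (2 * i + 1), y j), ?_, ?_⟩
    · intro i hi
      beta_reduce
      have hmem := hy (2 * i + 1) (by omega)
      rcases hmem with h | h
      · rw [h]
        norm_num
      · simp only [Set.mem_singleton_iff] at h
        rw [h, one_mul]
        rcases eps_cases (∑ j ∈ Finset.range (2 * i + 1), y j) with he | he <;>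
          rw [he] <;> norm_num
    · rw [← hsum, sum_range_two_mul]
      apply Finset.sum_congr rfl
      intro i _
      have h0 : (if (2 * i) % 2 = 0 then (0 : ℤ) else k (2 * i / 2)) = 0 := by
        rw [if_pos (by omega)]
      have h1 : (if (2 * i + 1) % 2 = 0 then (0 : ℤ) else k ((2 * i + 1) / 2)) = k i := by
        rw [if_neg (by omega)]
        congr 1
        omega
      rw [h0, h1]
      ring
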